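/- The functional (A, B) ↦ Q₂ⁱ(A‖B) := ∫₀^∞ tr[A (t+B)⁻¹ A (t+B)⁻¹] dt, defined on pairs of positive semidefinite matrices with supp(A) ⊆ supp(B) (taking B positive definite for simplicity), is jointly convex. -/

import Mathlib

open MeasureTheory Matrix Set ComplexOrder

variable {m : Type*} [Fintype m] [DecidableEq m]

/-- The integral matrix quotient `A/B := ∫₀^∞ (λ+B)⁻¹ A (λ+B)⁻¹ dλ`, defined entrywise. -/
noncomputable def mq (A B : Matrix m m ℂ) : Matrix m m ℂ :=
  Matrix.of fun i j =>
    ∫ l in Set.Ioi (0:ℝ),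
      ((l • (1 : Matrix m m ℂ) + B)⁻¹ * A * (l • (1 : Matrix m m ℂ) + B)⁻¹) i j

/-- Real power of a Hermitian matrix via the spectral decomposition (junk value `0` otherwise). -/
noncomputable def mrpow (A : Matrix m m ℂ) (r : ℝ) : Matrix m m ℂ :=
  if h : A.IsHermitian then
    (h.eigenvectorUnitary : Matrix m m ℂ) *
      Matrix.diagonal (fun i => ((h.eigenvalues i ^ r : ℝ) : ℂ)) *
      star (h.eigenvectorUnitary : Matrix m m ℂ)
  else 0

/-- Trace norm of a Hermitian matrix: the sum of the absolute values of its eigenvalues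
(junk value `0` otherwise). -/
noncomputable def traceNorm (A : Matrix m m ℂ) : ℝ :=
  if h : A.IsHermitian then ∑ i, |h.eigenvalues i| else 0

/-- Operator norm of a positive semidefinite (in particular Hermitian) matrix:
its largest eigenvalue (junk value `0` otherwise). -/
noncomputable def opNorm (A : Matrix m m ℂ) : ℝ :=
  if h : A.IsHermitian then ⨆ i, h.eigenvalues i else 0

/-- `Q₂^ι(A‖B) = tr[A (A/B)] = ∫₀^∞ tr[A (t+B)⁻¹ A (t+B)⁻¹] dt`. -/
noncomputable def Q2iota (A B : Matrix m m ℂ) : ℝ :=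
  ∫ t in Set.Ioi (0:ℝ),
    (A * (t • (1 : Matrix m m ℂ) + B)⁻¹ * A * (t • (1 : Matrix m m ℂ) + B)⁻¹).trace.re

/-- A projective measurement: a finite family of mutually orthogonal projections
summing to the identity. -/
structure PVM (m : Type*) [Fintype m] [DecidableEq m] where
  k : ℕ
  P : Fin k → Matrix m m ℂ
  herm : ∀ j, (P j).IsHermitian
  idem : ∀ j, P j * P j = P j
  orth : ∀ j j', j ≠ j' → P j * P j' = 0
  sum_eq : ∑ j, P j = 1

/-- The value `∑_j (tr[ρΛ_j])^α (tr[σΛ_j])^{1-α}` of a projective measurement. -/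
noncomputable def measVal (α : ℝ) (ρ σ : Matrix m m ℂ) (Λ : PVM m) : ℝ :=
  ∑ j, ((ρ * Λ.P j).trace.re) ^ α * ((σ * Λ.P j).trace.re) ^ (1 - α)

/-- The measured Rényi quantity `Q̌_α(ρ‖σ)`: for `α ∈ [1/2,1)` it is the infimum over
projective measurements of `∑_j (tr[ρΛ_j])^α (tr[σΛ_j])^{1-α}`. -/
noncomputable def Qmeas (α : ℝ) (ρ σ : Matrix m m ℂ) : ℝ :=
  sInf {v | ∃ Λ : PVM m, v = measVal α ρ σ Λ}

/-- The measured Rényi divergence `Ď_α(ρ‖σ) = (α-1)⁻¹ log Q̌_α(ρ‖σ)`. -/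
noncomputable def Dmeas (α : ℝ) (ρ σ : Matrix m m ℂ) : ℝ :=
  (1 / (α - 1)) * Real.log (Qmeas α ρ σ)

/-- The classical-quantum state `∑_x P(x) |x⟩⟨x| ⊗ ρ_x` as a matrix on `X × m`. -/
noncomputable def cqState {X : Type*} [Fintype X] [DecidableEq X]
    (P : X → ℝ) (ρ : X → Matrix m m ℂ) : Matrix (X × m) (X × m) ℂ :=
  Matrix.of fun p q => if p.1 = q.1 then (P p.1 : ℂ) * ρ p.1 p.2 q.2 else 0

set_option linter.unusedSectionVars false
set_option linter.unusedVariables false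


noncomputable def klog (a b : ℝ) : ℝ :=
  if a = b then a⁻¹ else (Real.log a - Real.log b) / (a - b)

lemma tendsto_logdiff (a b : ℝ) :
    Filter.Tendsto (fun t : ℝ => Real.log (t + a) - Real.log (t + b)) Filter.atTop (nhds 0) := by
  have h1 : Filter.Tendsto (fun t : ℝ => (t + a) / (t + b)) Filter.atTop (nhds 1) := by
    have he : ∀ᶠ t : ℝ in Filter.atTop, (t + a) / (t + b) = 1 + (a - b) / (t + b) := by
      filter_upwards [Filter.eventually_gt_atTop (max (-a) (-b))] with t ht
      have hb : t + b ≠ 0 := by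
        have := (max_lt_iff.mp ht).2; intro h; nlinarith
      field_simp
      ring
    have h2 : Filter.Tendsto (fun t : ℝ => 1 + (a - b) / (t + b)) Filter.atTop (nhds 1) := by
      have := Filter.Tendsto.div_atTop (tendsto_const_nhds (x := a - b))
        (Filter.tendsto_atTop_add_const_right _ b Filter.tendsto_id)
      simpa using Filter.Tendsto.const_add 1 this
    exact Filter.Tendsto.congr' (he.mono fun _ h => h.symm) h2
  have he2 : ∀ᶠ t : ℝ in Filter.atTop,
      Real.log ((t + a) / (t + b)) = Real.log (t + a) - Real.log (t + b) := by
    filter_upwards [Filter.eventually_gt_atTop (max (-a) (-b))] with t ht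
    have h1 : t + a ≠ 0 := by have := (max_lt_iff.mp ht).1; intro h; nlinarith
    have h2 : t + b ≠ 0 := by have := (max_lt_iff.mp ht).2; intro h; nlinarith
    exact Real.log_div h1 h2
  have := (Real.continuousAt_log (one_ne_zero)).tendsto.comp h1
  rw [Real.log_one] at this
  exact Filter.Tendsto.congr' he2 this

lemma integral_t_aux {a b : ℝ} (ha : 0 < a) (hb : 0 < b) :
    IntegrableOn (fun t : ℝ => ((t + a) * (t + b))⁻¹) (Ioi 0) volume ∧
      ∫ t in Ioi (0:ℝ), ((t + a) * (t + b))⁻¹ = klog a b := by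
  rcases eq_or_ne a b with rfl | hab
  · -- a = b
    have hderiv : ∀ t ∈ Ici (0:ℝ), HasDerivAt (fun t : ℝ => -(t + a)⁻¹) (((t + a) * (t + a))⁻¹) t := by
      intro t ht
      have h0 : t + a ≠ 0 := by have : (0:ℝ) ≤ t := ht; positivity
      have h := ((hasDerivAt_id t).add_const a).inv h0
      have h2 := h.neg
      refine h2.congr_deriv ?_
      simp only [id]; field_simp
      try ring
    have hpos : ∀ t ∈ Ioi (0:ℝ), 0 ≤ ((t + a) * (t + a))⁻¹ := by
      intro t ht; have : (0:ℝ) < t := ht; positivity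
    have hlim : Filter.Tendsto (fun t : ℝ => -(t + a)⁻¹) Filter.atTop (nhds 0) := by
      have := (Filter.tendsto_atTop_add_const_right _ a Filter.tendsto_id).inv_tendsto_atTop
      simpa using this.neg
    constructor
    · exact integrableOn_Ioi_deriv_of_nonneg' hderiv hpos hlim
    · have := integral_Ioi_of_hasDerivAt_of_nonneg' hderiv hpos hlim
      rw [this]
      simp [klog]
  · -- a ≠ b
    set G : ℝ → ℝ := fun t => (Real.log (t + a) - Real.log (t + b)) / (b - a) with hG
    have hderiv : ∀ t ∈ Ici (0:ℝ), HasDerivAt G (((t + a) * (t + b))⁻¹) t := by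
      intro t ht
      have ht0 : (0:ℝ) ≤ t := ht
      have h1 : t + a ≠ 0 := by positivity
      have h2 : t + b ≠ 0 := by positivity
      have d1 : HasDerivAt (fun t : ℝ => Real.log (t + a)) ((t + a)⁻¹) t := by
        simpa [Function.comp_def] using (Real.hasDerivAt_log h1).comp t ((hasDerivAt_id t).add_const a)
      have d2 : HasDerivAt (fun t : ℝ => Real.log (t + b)) ((t + b)⁻¹) t := by
        simpa [Function.comp_def] using (Real.hasDerivAt_log h2).comp t ((hasDerivAt_id t).add_const b)
      have h := (d1.sub d2).div_const (b - a)
      refine h.congr_deriv ?_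
      have hba : b - a ≠ 0 := sub_ne_zero.mpr (Ne.symm hab)
      field_simp
      try ring
    have hpos : ∀ t ∈ Ioi (0:ℝ), 0 ≤ ((t + a) * (t + b))⁻¹ := by
      intro t ht; have : (0:ℝ) < t := ht; positivity
    have hlim : Filter.Tendsto G Filter.atTop (nhds 0) := by
      have := (tendsto_logdiff a b).div_const (b - a)
      simpa using this
    constructor
    · exact integrableOn_Ioi_deriv_of_nonneg' hderiv hpos hlim
    · have := integral_Ioi_of_hasDerivAt_of_nonneg' hderiv hpos hlim
      rw [this]
      have hba : b - a ≠ 0 := sub_ne_zero.mpr (Ne.symm hab)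
      have hab' : a - b ≠ 0 := sub_ne_zero.mpr hab
      simp only [klog, if_neg hab, hG]
      field_simp
      ring




lemma denom_pos {a b τ : ℝ} (ha : 0 < a) (hb : 0 < b) (h0 : 0 ≤ τ) (h1 : τ ≤ 1) :
    0 < τ * a + (1 - τ) * b := by
  rcases eq_or_lt_of_le h0 with rfl | h
  · simpa using hb
  · have : 0 < τ * a := by positivity
    nlinarith

lemma integrableOn_tau {a b : ℝ} (ha : 0 < a) (hb : 0 < b) :
    IntegrableOn (fun τ : ℝ => (τ * a + (1 - τ) * b)⁻¹) (Ioc 0 1) volume := by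
  have hc : ContinuousOn (fun τ : ℝ => (τ * a + (1 - τ) * b)⁻¹) (Icc 0 1) := by
    apply ContinuousOn.inv₀
    · fun_prop
    · intro τ hτ
      exact (denom_pos ha hb hτ.1 hτ.2).ne'
  exact (hc.integrableOn_Icc).mono_set Ioc_subset_Icc_self

lemma integral_tau {a b : ℝ} (ha : 0 < a) (hb : 0 < b) :
    ∫ τ in Ioc (0:ℝ) 1, (τ * a + (1 - τ) * b)⁻¹ = klog a b := by
  rw [← intervalIntegral.integral_of_le zero_le_one]
  rcases eq_or_ne a b with rfl | hab
  · have : (fun τ : ℝ => (τ * a + (1 - τ) * a)⁻¹) = fun _ => a⁻¹ := by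
      funext τ; ring_nf
    rw [this]
    simp [klog]
  · have hab' : a - b ≠ 0 := sub_ne_zero.mpr hab
    set F : ℝ → ℝ := fun τ => Real.log (b + τ * (a - b)) / (a - b) with hF
    have hderiv : ∀ τ ∈ uIcc (0:ℝ) 1, HasDerivAt F ((τ * a + (1 - τ) * b)⁻¹) τ := by
      intro τ hτ
      rw [uIcc_of_le zero_le_one] at hτ
      have hpos : 0 < b + τ * (a - b) := by
        have := denom_pos ha hb hτ.1 hτ.2; nlinarith [this]
      have d1 : HasDerivAt (fun τ : ℝ => b + τ * (a - b)) (a - b) τ := by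
        simpa [mul_comm] using ((hasDerivAt_id τ).const_mul (a - b)).const_add b
      have d2 := (Real.hasDerivAt_log hpos.ne').comp τ d1
      have d3 := d2.div_const (a - b)
      have : (b + τ * (a - b))⁻¹ * (a - b) / (a - b) = (τ * a + (1 - τ) * b)⁻¹ := by
        rw [mul_div_assoc, div_self hab', mul_one, show b + τ * (a - b) = τ * a + (1 - τ) * b by ring]
      rw [← this]
      exact d3
    have hint : IntervalIntegrable (fun τ : ℝ => (τ * a + (1 - τ) * b)⁻¹) volume 0 1 := by
      apply ContinuousOn.intervalIntegrable
      rw [uIcc_of_le zero_le_one]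
      apply ContinuousOn.inv₀
      · fun_prop
      · intro τ hτ
        exact (denom_pos ha hb hτ.1 hτ.2).ne'
    rw [intervalIntegral.integral_eq_sub_of_hasDerivAt hderiv hint]
    simp only [hF, klog, if_neg hab]
    rw [show b + 1 * (a - b) = a by ring, show b + 0 * (a - b) = b by ring]
    field_simp



section TraceLemmas


lemma conj_mul' (hU1 : U * Uᴴ = 1) (X Y : Matrix m m ℂ) :
    (Uᴴ * X * U) * (Uᴴ * Y * U) = Uᴴ * (X * Y) * U := by
  simp only [← Matrix.mul_assoc]
  rw [Matrix.mul_assoc (Uᴴ * X) U Uᴴ, hU1, Matrix.mul_one]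

lemma trace_conj' (hU1 : U * Uᴴ = 1) (X : Matrix m m ℂ) :
    (Uᴴ * X * U).trace = X.trace := by
  rw [Matrix.trace_mul_cycle, hU1, Matrix.one_mul]

lemma reconj (hU2 : Uᴴ * U = 1) (X : Matrix m m ℂ) :
    Uᴴ * (U * X * Uᴴ) * U = X := by
  simp only [← Matrix.mul_assoc]
  rw [hU2, Matrix.one_mul, Matrix.mul_assoc X Uᴴ U, hU2, Matrix.mul_one]

lemma trace_herm_pair_aux (X Y : Matrix m m ℂ) :
    (Xᴴ * Y).trace = ∑ i, ∑ j, star (X i j) * Y i j := by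
  simp only [Matrix.trace, Matrix.diag, Matrix.mul_apply, Matrix.conjTranspose_apply]
  rw [Finset.sum_comm]

lemma trace_quad_entry (P Q : Matrix m m ℂ) (c : m → ℂ) :
    (P * diagonal c * Q * diagonal c).trace = ∑ i, ∑ j, P i j * Q j i * c i * c j := by
  simp only [Matrix.trace, Matrix.diag, Matrix.mul_apply, Matrix.diagonal_apply, mul_ite,
    ite_mul, mul_zero, zero_mul, Finset.sum_ite_eq, Finset.sum_ite_eq', Finset.mem_univ,
    if_true, Finset.sum_mul, Finset.mul_sum]
  refine Finset.sum_congr rfl fun i _ => Finset.sum_congr rfl fun j _ => by ring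

lemma trace_dmm_entry (M : Matrix m m ℂ) (c : m → ℂ) :
    (diagonal c * M * Mᴴ).trace = ∑ i, ∑ j, c i * (M i j * star (M i j)) := by
  simp only [Matrix.trace, Matrix.diag, Matrix.mul_apply, Matrix.diagonal_apply, mul_ite,
    ite_mul, mul_zero, zero_mul, Finset.sum_ite_eq, Finset.sum_ite_eq', Finset.mem_univ,
    if_true, Finset.sum_mul, Finset.mul_sum, Matrix.conjTranspose_apply]
  refine Finset.sum_congr rfl fun i _ => Finset.sum_congr rfl fun j _ => by ring

lemma trace_mdm_entry (M : Matrix m m ℂ) (c : m → ℂ) :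
    (M * diagonal c * Mᴴ).trace = ∑ i, ∑ j, c j * (M i j * star (M i j)) := by
  simp only [Matrix.trace, Matrix.diag, Matrix.mul_apply, Matrix.diagonal_apply, mul_ite,
    ite_mul, mul_zero, zero_mul, Finset.sum_ite_eq, Finset.sum_ite_eq', Finset.mem_univ,
    if_true, Finset.sum_mul, Finset.mul_sum, Matrix.conjTranspose_apply]
  refine Finset.sum_congr rfl fun i _ => Finset.sum_congr rfl fun j _ => by ring

end TraceLemmas



lemma posdef_rsmul {B : Matrix m m ℂ} (hB : B.PosDef) {r : ℝ} (hr : 0 < r) :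
    (r • B).PosDef := by
  constructor
  · have : (r • B)ᴴ = r • Bᴴ := by
      ext i j; simp [Matrix.conjTranspose_apply, Matrix.smul_apply, Complex.real_smul]
    rw [Matrix.IsHermitian, this, hB.1.eq]
  · intro x hx
    exact (hB.smul hr).2 hx

lemma posdef_combo {B₁ B₂ : Matrix m m ℂ} (hB₁ : B₁.PosDef) (hB₂ : B₂.PosDef)
    {l : ℝ} (hl0 : 0 ≤ l) (hl1 : l ≤ 1) : (l • B₁ + (1 - l) • B₂).PosDef := by
  rcases eq_or_lt_of_le hl0 with rfl | hl0'
  · simpa using hB₂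
  rcases eq_or_lt_of_le hl1 with rfl | hl1'
  · simpa using hB₁
  exact (posdef_rsmul hB₁ hl0').add (posdef_rsmul hB₂ (by linarith))

lemma posdef_decomp {B : Matrix m m ℂ} (hB : B.PosDef) :
    ∃ (U : Matrix m m ℂ) (d : m → ℝ), U * Uᴴ = 1 ∧ Uᴴ * U = 1 ∧
      B = U * diagonal (fun i => (d i : ℂ)) * Uᴴ ∧ ∀ i, 0 < d i := by
  refine ⟨(hB.1.eigenvectorUnitary : Matrix m m ℂ), hB.1.eigenvalues, ?_, ?_, ?_, hB.eigenvalues_pos⟩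
  · rw [← Matrix.star_eq_conjTranspose]
    exact Matrix.mem_unitaryGroup_iff.mp (hB.1.eigenvectorUnitary).2
  · rw [← Matrix.star_eq_conjTranspose]
    exact Matrix.mem_unitaryGroup_iff'.mp (hB.1.eigenvectorUnitary).2
  · have h := hB.1.spectral_theorem
    rw [Unitary.conjStarAlgAut_apply, Matrix.star_eq_conjTranspose] at h
    exact h

section Core

variable {U B A : Matrix m m ℂ} {d : m → ℝ}

lemma real_smul_matrix (r : ℝ) (A : Matrix m m ℂ) : r • A = (r : ℂ) • A := by
  ext i j; simp [Matrix.smul_apply, Complex.real_smul]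

lemma conj_mul2 (hU2 : Uᴴ * U = 1) (X Y : Matrix m m ℂ) :
    (U * X * Uᴴ) * (U * Y * Uᴴ) = U * (X * Y) * Uᴴ := by
  simp only [← Matrix.mul_assoc]
  rw [Matrix.mul_assoc (U * X) Uᴴ U, hU2, Matrix.mul_one]

lemma trace_conj2 (hU2 : Uᴴ * U = 1) (X : Matrix m m ℂ) :
    (U * X * Uᴴ).trace = X.trace := by
  rw [Matrix.trace_mul_cycle, hU2, Matrix.one_mul]

lemma reconj2 (hU1 : U * Uᴴ = 1) (X : Matrix m m ℂ) :
    U * (Uᴴ * X * U) * Uᴴ = X := by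
  simp only [← Matrix.mul_assoc]
  rw [hU1, Matrix.one_mul, Matrix.mul_assoc X U Uᴴ, hU1, Matrix.mul_one]

lemma shift_decomp (hU1 : U * Uᴴ = 1)
    (hBd : B = U * diagonal (fun i => (d i : ℂ)) * Uᴴ) (t : ℝ) :
    t • (1 : Matrix m m ℂ) + B = U * diagonal (fun i => ((t + d i : ℝ) : ℂ)) * Uᴴ := by
  rw [hBd]
  have h2 : (diagonal (fun i => ((t + d i : ℝ) : ℂ)) : Matrix m m ℂ)
      = (t : ℂ) • 1 + diagonal (fun i => (d i : ℂ)) := by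
    ext i j
    by_cases h : i = j
    · subst h
      simp only [Matrix.diagonal_apply_eq, Matrix.add_apply, Matrix.smul_apply,
        Matrix.one_apply_eq, smul_eq_mul, mul_one]
      push_cast; ring
    · simp [Matrix.diagonal_apply, h, Matrix.one_apply]
  rw [h2, Matrix.mul_add, Matrix.add_mul, real_smul_matrix]
  congr 1
  rw [Matrix.mul_smul, Matrix.smul_mul, Matrix.mul_one, hU1]

lemma resolvent_decomp (hU1 : U * Uᴴ = 1) (hU2 : Uᴴ * U = 1)
    (hBd : B = U * diagonal (fun i => (d i : ℂ)) * Uᴴ) (hd : ∀ i, 0 < d i)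
    (t : ℝ) (ht : 0 ≤ t) :
    (t • (1 : Matrix m m ℂ) + B)⁻¹
      = U * diagonal (fun i => (((t + d i)⁻¹ : ℝ) : ℂ)) * Uᴴ := by
  rw [shift_decomp hU1 hBd t]
  apply Matrix.inv_eq_right_inv
  rw [conj_mul2 hU2, Matrix.diagonal_mul_diagonal]
  have h : (fun i => ((t + d i : ℝ) : ℂ) * (((t + d i)⁻¹ : ℝ) : ℂ)) = fun _ => (1:ℂ) := by
    funext i
    have hne : t + d i ≠ 0 := by have := hd i; positivity
    have hne' : ((t : ℂ) + (d i : ℂ)) ≠ 0 := by exact_mod_cast hne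
    push_cast
    exact mul_inv_cancel₀ hne'
  rw [h, Matrix.diagonal_one, Matrix.mul_one, hU1]

lemma integrand_eq (hU1 : U * Uᴴ = 1) (hU2 : Uᴴ * U = 1)
    (hBd : B = U * diagonal (fun i => (d i : ℂ)) * Uᴴ) (hd : ∀ i, 0 < d i)
    (hA : A.IsHermitian) (t : ℝ) (ht : 0 ≤ t) :
    (A * (t • (1 : Matrix m m ℂ) + B)⁻¹ * A * (t • (1 : Matrix m m ℂ) + B)⁻¹).trace.re
      = ∑ i, ∑ j, Complex.normSq ((Uᴴ * A * U) i j) * ((t + d i) * (t + d j))⁻¹ := by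
  set At := Uᴴ * A * U with hAt
  have hAtherm : At.IsHermitian := by
    rw [Matrix.IsHermitian, hAt]
    simp only [Matrix.conjTranspose_mul, Matrix.conjTranspose_conjTranspose]
    rw [hA.eq, Matrix.mul_assoc]
  have hAeq : A = U * At * Uᴴ := (reconj2 hU1 A).symm
  rw [resolvent_decomp hU1 hU2 hBd hd t ht]
  set c : m → ℂ := fun i => (((t + d i)⁻¹ : ℝ) : ℂ) with hc
  have h1 : A * (U * diagonal c * Uᴴ) * A * (U * diagonal c * Uᴴ)
      = U * (At * diagonal c * At * diagonal c) * Uᴴ := by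
    have key : ∀ Y : Matrix m m ℂ, Uᴴ * (U * Y) = Y := fun Y => by
      rw [← Matrix.mul_assoc, hU2, Matrix.one_mul]
    rw [hAeq]
    simp only [Matrix.mul_assoc, key]
  rw [h1, trace_conj2 hU2, trace_quad_entry, Complex.re_sum]
  refine Finset.sum_congr rfl fun i _ => ?_
  rw [Complex.re_sum]
  refine Finset.sum_congr rfl fun j _ => ?_
  have hij : At j i = star (At i j) := by
    have h := hAtherm.apply i j
    rw [← h, star_star]
  rw [hij]
  have : At i j * star (At i j) = ((Complex.normSq (At i j) : ℝ) : ℂ) := by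
    rw [Complex.star_def, Complex.mul_conj]
  rw [this, hc]
  simp only [← Complex.ofReal_mul, Complex.ofReal_re]
  rw [mul_inv]
  ring

end Core

section Repr

variable {U B A : Matrix m m ℂ} {d : m → ℝ}

lemma Q2iota_repr (hU1 : U * Uᴴ = 1) (hU2 : Uᴴ * U = 1)
    (hBd : B = U * diagonal (fun i => (d i : ℂ)) * Uᴴ) (hd : ∀ i, 0 < d i)
    (hA : A.IsHermitian) :
    Q2iota A B = ∑ i, ∑ j, Complex.normSq ((Uᴴ * A * U) i j) * klog (d i) (d j) := by
  unfold Q2iota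
  rw [MeasureTheory.setIntegral_congr_fun measurableSet_Ioi
    (fun t (ht : t ∈ Ioi (0:ℝ)) => integrand_eq hU1 hU2 hBd hd hA t (le_of_lt ht))]
  have hfun : (fun t : ℝ => ∑ i, ∑ j,
        Complex.normSq ((Uᴴ * A * U) i j) * ((t + d i) * (t + d j))⁻¹)
      = fun t : ℝ => ∑ p : m × m,
        Complex.normSq ((Uᴴ * A * U) p.1 p.2) * ((t + d p.1) * (t + d p.2))⁻¹ := by
    funext t
    rw [Fintype.sum_prod_type]
  rw [hfun, MeasureTheory.integral_finset_sum]
  · rw [Fintype.sum_prod_type]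
    refine Finset.sum_congr rfl fun i _ => Finset.sum_congr rfl fun j _ => ?_
    show (∫ t in Ioi (0:ℝ), Complex.normSq ((Uᴴ * A * U) i j) * ((t + d i) * (t + d j))⁻¹) = _
    rw [MeasureTheory.integral_const_mul, (integral_t_aux (hd i) (hd j)).2]
  · intro p _
    exact ((integral_t_aux (hd p.1) (hd p.2)).1).const_mul _

lemma tau_repr (hd : ∀ i, 0 < d i) (w : m → m → ℝ) :
    ∑ i, ∑ j, w i j * klog (d i) (d j)
      = ∫ τ in Ioc (0:ℝ) 1, ∑ i, ∑ j, w i j * (τ * d i + (1 - τ) * d j)⁻¹ := by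
  have hfun : (fun τ : ℝ => ∑ i, ∑ j, w i j * (τ * d i + (1 - τ) * d j)⁻¹)
      = fun τ : ℝ => ∑ p : m × m, w p.1 p.2 * (τ * d p.1 + (1 - τ) * d p.2)⁻¹ := by
    funext τ
    rw [Fintype.sum_prod_type]
  rw [hfun, MeasureTheory.integral_finset_sum]
  · rw [Fintype.sum_prod_type]
    refine Finset.sum_congr rfl fun i _ => Finset.sum_congr rfl fun j _ => ?_
    show _ = (∫ τ in Ioc (0:ℝ) 1, w i j * (τ * d i + (1 - τ) * d j)⁻¹)
    rw [MeasureTheory.integral_const_mul, integral_tau (hd i) (hd j)]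
  · intro p _
    exact (integrableOn_tau (hd p.1) (hd p.2)).const_mul _

lemma integrable_gsum (hd : ∀ i, 0 < d i) (w : m → m → ℝ) :
    IntegrableOn (fun τ : ℝ => ∑ i, ∑ j, w i j * (τ * d i + (1 - τ) * d j)⁻¹)
      (Ioc (0:ℝ) 1) volume := by
  have hfun : (fun τ : ℝ => ∑ i, ∑ j, w i j * (τ * d i + (1 - τ) * d j)⁻¹)
      = fun τ : ℝ => ∑ p : m × m, w p.1 p.2 * (τ * d p.1 + (1 - τ) * d p.2)⁻¹ := by
    funext τ
    rw [Fintype.sum_prod_type]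
  rw [hfun]
  exact MeasureTheory.integrable_finset_sum _
    (fun p _ => (integrableOn_tau (hd p.1) (hd p.2)).const_mul _)

end Repr

section Kiefer

variable {U B A : Matrix m m ℂ} {d : m → ℝ}

/-- The affine comparison functional. -/
noncomputable def Hval (τ : ℝ) (A B W : Matrix m m ℂ) : ℝ :=
  2 * (Aᴴ * W).trace.re - (τ * (B * W * Wᴴ).trace.re + (1 - τ) * (W * B * Wᴴ).trace.re)

lemma scalar_kiefer (a w : ℂ) {c : ℝ} (hc : 0 < c) :
    2 * (star a * w).re - c * Complex.normSq w ≤ Complex.normSq a * c⁻¹ := by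
  rw [← div_eq_mul_inv, le_div_iff₀ hc]
  simp only [Complex.normSq_apply, Complex.mul_re, Complex.star_def, Complex.conj_re,
    Complex.conj_im]
  nlinarith [sq_nonneg (a.re - c * w.re), sq_nonneg (a.im - c * w.im)]

lemma H_expand (hU1 : U * Uᴴ = 1) (hU2 : Uᴴ * U = 1)
    (hBd : B = U * diagonal (fun i => (d i : ℂ)) * Uᴴ) (τ : ℝ) (W : Matrix m m ℂ) :
    Hval τ A B W
      = ∑ i, ∑ j, (2 * (star ((Uᴴ * A * U) i j) * ((Uᴴ * W * U) i j)).re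
          - (τ * d i + (1 - τ) * d j) * Complex.normSq ((Uᴴ * W * U) i j)) := by
  have key : ∀ Y : Matrix m m ℂ, Uᴴ * (U * Y) = Y := fun Y => by
    rw [← Matrix.mul_assoc, hU2, Matrix.one_mul]
  have key2 : ∀ Y : Matrix m m ℂ, U * (Uᴴ * Y) = Y := fun Y => by
    rw [← Matrix.mul_assoc, hU1, Matrix.one_mul]
  set At := Uᴴ * A * U with hAt
  set M := Uᴴ * W * U with hM
  have hWeq : W = U * M * Uᴴ := (reconj2 hU1 W).symm
  have hWH : Wᴴ = U * Mᴴ * Uᴴ := by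
    rw [hWeq]
    simp only [Matrix.conjTranspose_mul, Matrix.conjTranspose_conjTranspose, Matrix.mul_assoc]
  have h1 : (Aᴴ * W).trace = ∑ i, ∑ j, star (At i j) * M i j := by
    have e1 : Atᴴ * M = Uᴴ * (Aᴴ * W) * U := by
      rw [hAt, hM]
      simp only [Matrix.conjTranspose_mul, Matrix.conjTranspose_conjTranspose]
      simp only [Matrix.mul_assoc, key, key2]
    rw [← trace_conj' hU1 (Aᴴ * W), ← e1, trace_herm_pair_aux]
  have h2 : (B * W * Wᴴ).trace
      = ∑ i, ∑ j, ((d i : ℂ)) * (M i j * star (M i j)) := by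
    have e2 : B * W * Wᴴ = U * (diagonal (fun i => (d i : ℂ)) * M * Mᴴ) * Uᴴ := by
      rw [hBd, hWeq]
      simp only [Matrix.conjTranspose_mul, Matrix.conjTranspose_conjTranspose,
        Matrix.mul_assoc, key, key2]
    rw [e2, trace_conj2 hU2, trace_dmm_entry]
  have h3 : (W * B * Wᴴ).trace
      = ∑ i, ∑ j, ((d j : ℂ)) * (M i j * star (M i j)) := by
    have e3 : W * B * Wᴴ = U * (M * diagonal (fun i => (d i : ℂ)) * Mᴴ) * Uᴴ := by
      rw [hBd, hWeq]
      simp only [Matrix.conjTranspose_mul, Matrix.conjTranspose_conjTranspose,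
        Matrix.mul_assoc, key, key2]
    rw [e3, trace_conj2 hU2, trace_mdm_entry]
  have hre : ∀ (z : ℂ) (r : ℝ), ((r : ℂ) * (z * star z)).re = r * Complex.normSq z := by
    intro z r
    rw [Complex.star_def, Complex.mul_conj, ← Complex.ofReal_mul, Complex.ofReal_re]
  rw [Hval, h1, h2, h3]
  simp only [Complex.re_sum, hre]
  simp only [Finset.mul_sum, ← Finset.sum_sub_distrib, ← Finset.sum_add_distrib]
  exact Finset.sum_congr rfl fun i _ => Finset.sum_congr rfl fun j _ => by ring

lemma kiefer_ineq (hU1 : U * Uᴴ = 1) (hU2 : Uᴴ * U = 1)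
    (hBd : B = U * diagonal (fun i => (d i : ℂ)) * Uᴴ) (hd : ∀ i, 0 < d i)
    {τ : ℝ} (hτ0 : 0 ≤ τ) (hτ1 : τ ≤ 1) (W : Matrix m m ℂ) :
    Hval τ A B W
      ≤ ∑ i, ∑ j, Complex.normSq ((Uᴴ * A * U) i j) * (τ * d i + (1 - τ) * d j)⁻¹ := by
  rw [H_expand hU1 hU2 hBd τ W]
  refine Finset.sum_le_sum fun i _ => Finset.sum_le_sum fun j _ => ?_
  exact scalar_kiefer _ _ (denom_pos (hd i) (hd j) hτ0 hτ1)

lemma kiefer_eq (hU1 : U * Uᴴ = 1) (hU2 : Uᴴ * U = 1)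
    (hBd : B = U * diagonal (fun i => (d i : ℂ)) * Uᴴ) (hd : ∀ i, 0 < d i)
    {τ : ℝ} (hτ0 : 0 ≤ τ) (hτ1 : τ ≤ 1) :
    Hval τ A B (U * (Matrix.of fun i j => ((Uᴴ * A * U) i j)
        * (((τ * d i + (1 - τ) * d j)⁻¹ : ℝ) : ℂ)) * Uᴴ)
      = ∑ i, ∑ j, Complex.normSq ((Uᴴ * A * U) i j) * (τ * d i + (1 - τ) * d j)⁻¹ := by
  set At := Uᴴ * A * U with hAt
  set N : Matrix m m ℂ :=
    Matrix.of fun i j => At i j * (((τ * d i + (1 - τ) * d j)⁻¹ : ℝ) : ℂ) with hN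
  rw [H_expand hU1 hU2 hBd τ (U * N * Uᴴ)]
  have hM : Uᴴ * (U * N * Uᴴ) * U = N := reconj hU2 N
  rw [hM]
  refine Finset.sum_congr rfl fun i _ => Finset.sum_congr rfl fun j _ => ?_
  have hc : 0 < τ * d i + (1 - τ) * d j := denom_pos (hd i) (hd j) hτ0 hτ1
  set c := τ * d i + (1 - τ) * d j
  have hNij : N i j = At i j * ((c⁻¹ : ℝ) : ℂ) := rfl
  have e1 : (star (At i j) * N i j).re = Complex.normSq (At i j) * c⁻¹ := by
    rw [hNij, ← mul_assoc, Complex.star_def, mul_comm ((starRingEnd ℂ) (At i j)) (At i j),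
      Complex.mul_conj, ← Complex.ofReal_mul, Complex.ofReal_re]
  have e2 : Complex.normSq (N i j) = Complex.normSq (At i j) * (c⁻¹ * c⁻¹) := by
    rw [hNij, Complex.normSq_mul, Complex.normSq_ofReal]
  rw [e1, e2]
  field_simp
  ring

end Kiefer

section Main

variable {A : Matrix m m ℂ}

lemma herm_rsmul (hA : A.IsHermitian) (r : ℝ) : (r • A).IsHermitian := by
  rw [real_smul_matrix, Matrix.IsHermitian, Matrix.conjTranspose_smul, hA.eq]
  congr 1
  simp [Complex.star_def, Complex.conj_ofReal]

lemma H_lin (τ l : ℝ) (A₁ A₂ B₁ B₂ W : Matrix m m ℂ) :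
    Hval τ (l • A₁ + (1 - l) • A₂) (l • B₁ + (1 - l) • B₂) W
      = l * Hval τ A₁ B₁ W + (1 - l) * Hval τ A₂ B₂ W := by
  have hA' : ((l • A₁ + (1 - l) • A₂)ᴴ * W).trace
      = ((l : ℝ) : ℂ) * (A₁ᴴ * W).trace + ((1 - l : ℝ) : ℂ) * (A₂ᴴ * W).trace := by
    rw [real_smul_matrix, real_smul_matrix]
    simp [Matrix.conjTranspose_add, Matrix.conjTranspose_smul, Matrix.add_mul,
      Matrix.smul_mul, Matrix.trace_add, Matrix.trace_smul, Complex.star_def,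
      Complex.conj_ofReal, smul_eq_mul]
  have hB1' : ((l • B₁ + (1 - l) • B₂) * W * Wᴴ).trace
      = ((l : ℝ) : ℂ) * (B₁ * W * Wᴴ).trace + ((1 - l : ℝ) : ℂ) * (B₂ * W * Wᴴ).trace := by
    rw [real_smul_matrix, real_smul_matrix]
    simp [Matrix.add_mul, Matrix.smul_mul, Matrix.trace_add, Matrix.trace_smul, smul_eq_mul]
  have hB2' : (W * (l • B₁ + (1 - l) • B₂) * Wᴴ).trace
      = ((l : ℝ) : ℂ) * (W * B₁ * Wᴴ).trace + ((1 - l : ℝ) : ℂ) * (W * B₂ * Wᴴ).trace := by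
    rw [real_smul_matrix, real_smul_matrix]
    simp [Matrix.mul_add, Matrix.add_mul, Matrix.mul_smul, Matrix.smul_mul,
      Matrix.trace_add, Matrix.trace_smul, smul_eq_mul]
  simp only [Hval, hA', hB1', hB2', Complex.add_re, Complex.mul_re, Complex.ofReal_re,
    Complex.ofReal_im]
  ring

end Main

/-- Joint convexity of `Q₂^ι`. -/
theorem Q2iota_jointly_convex (A₁ A₂ B₁ B₂ : Matrix m m ℂ)
    (hA₁ : A₁.PosSemidef) (hA₂ : A₂.PosSemidef) (hB₁ : B₁.PosDef) (hB₂ : B₂.PosDef)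
    (l : ℝ) (hl0 : 0 ≤ l) (hl1 : l ≤ 1) :
    Q2iota (l • A₁ + (1 - l) • A₂) (l • B₁ + (1 - l) • B₂)
      ≤ l * Q2iota A₁ B₁ + (1 - l) * Q2iota A₂ B₂ := by
  have hAb : (l • A₁ + (1 - l) • A₂).IsHermitian :=
    (herm_rsmul hA₁.1 l).add (herm_rsmul hA₂.1 (1 - l))
  have hBb : (l • B₁ + (1 - l) • B₂).PosDef := posdef_combo hB₁ hB₂ hl0 hl1
  obtain ⟨U, d, hU1, hU2, hBd, hd⟩ := posdef_decomp hBb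
  obtain ⟨U₁, d₁, hU11, hU12, hB1d, hd1⟩ := posdef_decomp hB₁
  obtain ⟨U₂, d₂, hU21, hU22, hB2d, hd2⟩ := posdef_decomp hB₂
  rw [Q2iota_repr hU1 hU2 hBd hd hAb, Q2iota_repr hU11 hU12 hB1d hd1 hA₁.1,
    Q2iota_repr hU21 hU22 hB2d hd2 hA₂.1,
    tau_repr hd (fun i j => Complex.normSq ((Uᴴ * (l • A₁ + (1 - l) • A₂) * U) i j)),
    tau_repr hd1 (fun i j => Complex.normSq ((U₁ᴴ * A₁ * U₁) i j)),
    tau_repr hd2 (fun i j => Complex.normSq ((U₂ᴴ * A₂ * U₂) i j))]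
  have hI := integrable_gsum hd (fun i j => Complex.normSq ((Uᴴ * (l • A₁ + (1 - l) • A₂) * U) i j))
  have hI1 := integrable_gsum hd1 (fun i j => Complex.normSq ((U₁ᴴ * A₁ * U₁) i j))
  have hI2 := integrable_gsum hd2 (fun i j => Complex.normSq ((U₂ᴴ * A₂ * U₂) i j))
  have step1 : (∫ τ in Ioc (0:ℝ) 1, ∑ i, ∑ j,
        Complex.normSq ((Uᴴ * (l • A₁ + (1 - l) • A₂) * U) i j) * (τ * d i + (1 - τ) * d j)⁻¹)
      ≤ ∫ τ in Ioc (0:ℝ) 1,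
        (l * ∑ i, ∑ j, Complex.normSq ((U₁ᴴ * A₁ * U₁) i j) * (τ * d₁ i + (1 - τ) * d₁ j)⁻¹)
        + ((1 - l) * ∑ i, ∑ j, Complex.normSq ((U₂ᴴ * A₂ * U₂) i j) * (τ * d₂ i + (1 - τ) * d₂ j)⁻¹) := by
    apply MeasureTheory.setIntegral_mono_on hI ((hI1.const_mul l).add (hI2.const_mul (1 - l)))
      measurableSet_Ioc
    intro τ hτ
    have hτ0 : (0:ℝ) ≤ τ := le_of_lt hτ.1
    have hτ1 : τ ≤ 1 := hτ.2
    set W := U * (Matrix.of fun i j => ((Uᴴ * (l • A₁ + (1 - l) • A₂) * U) i j)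
        * (((τ * d i + (1 - τ) * d j)⁻¹ : ℝ) : ℂ)) * Uᴴ with hW
    have he := kiefer_eq (A := l • A₁ + (1 - l) • A₂) hU1 hU2 hBd hd hτ0 hτ1
    have hlin := H_lin τ l A₁ A₂ B₁ B₂ W
    have h1 := kiefer_ineq (A := A₁) hU11 hU12 hB1d hd1 hτ0 hτ1 W
    have h2 := kiefer_ineq (A := A₂) hU21 hU22 hB2d hd2 hτ0 hτ1 W
    refine le_trans (le_of_eq he.symm) ?_
    rw [hlin]
    exact add_le_add (mul_le_mul_of_nonneg_left h1 hl0)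
      (mul_le_mul_of_nonneg_left h2 (by linarith))
  refine le_trans step1 (le_of_eq ?_)
  rw [MeasureTheory.integral_add (hI1.const_mul l) (hI2.const_mul (1 - l)),
    MeasureTheory.integral_const_mul, MeasureTheory.integral_const_mul]
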